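/- Let P be the four-element poset {x₁, x₂, y₁, y₂} in which xᵢ < yⱼ for all i, j ∈ {1,2}, with x₁, x₂ incomparable and y₁, y₂ incomparable. Let M be the P-module over ℝ with M(p) = ℝ for every p ∈ P, whose structure map φ_{x₁y₁} is multiplication by 2 and whose structure maps φ_{x₁y₂}, φ_{x₂y₁}, φ_{x₂y₂} are the identity. Then M does not admit an inner product structure. -/

import Mathlib

/-!
STATEMENT 5: The module over the poset {x₁, x₂ < y₁, y₂} with value ℝ everywhere,
where φ_{x₁y₁} is multiplication by 2 and the other three structure maps are the
identity, does not admit an inner product structure.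
-/

/-- The four-element poset {x₁, x₂, y₁, y₂} with xᵢ < yⱼ for all i, j. -/
inductive P5 : Type
  | x1 | x2 | y1 | y2
deriving DecidableEq

/-- `true` on the minimal elements x₁, x₂. -/
def P5.isLow : P5 → Bool
  | .x1 => true
  | .x2 => true
  | .y1 => false
  | .y2 => false

instance : Fintype P5 :=
  ⟨⟨[P5.x1, P5.x2, P5.y1, P5.y2], by decide⟩, fun x => by cases x <;> decide⟩

instance : PartialOrder P5 where
  le a b := a = b ∨ (a.isLow = true ∧ b.isLow = false)
  le_refl a := Or.inl rfl
  le_trans a b c hab hbc := by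
    rcases hab with rfl | hab
    · exact hbc
    · rcases hbc with rfl | hbc
      · exact Or.inr hab
      · exact Or.inr ⟨hab.1, hbc.2⟩
  le_antisymm a b hab hba := by
    rcases hab with rfl | hab
    · rfl
    · rcases hba with rfl | hba
      · rfl
      · exact absurd (hab.2.symm.trans hba.1) (by simp)

/-- An inner product structure on a `C`-module over ℝ: a family of inner products
(given as `InnerProductSpace.Core`) such that each structure map preserves inner
products on the orthogonal complement of its kernel. -/
structure IPStructure {C : Type*} [PartialOrder C] (M : C → Type*)
    [∀ x, AddCommGroup (M x)] [∀ x, Module ℝ (M x)]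
    (φ : ∀ x y : C, x ≤ y → (M x →ₗ[ℝ] M y)) where
  core : ∀ x, InnerProductSpace.Core ℝ (M x)
  compat : ∀ (x y : C) (h : x ≤ y) (v w : M x),
    (∀ u ∈ LinearMap.ker (φ x y h), (core x).inner v u = 0) →
    (∀ u ∈ LinearMap.ker (φ x y h), (core x).inner w u = 0) →
    (core y).inner (φ x y h v) (φ x y h w) = (core x).inner v w

/-- The structure maps: multiplication by 2 on x₁ → y₁ and the identity otherwise. -/
noncomputable def phi5 (a b : P5) (_ : a ≤ b) : ℝ →ₗ[ℝ] ℝ :=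
  if a = P5.x1 ∧ b = P5.y1 then (2 : ℝ) • LinearMap.id else LinearMap.id

theorem stmt5 : ¬ Nonempty (IPStructure (fun _ : P5 => ℝ) phi5) := by
  rintro ⟨s⟩
  -- inner with 0 is 0
  have hz : ∀ p : P5, ∀ v : ℝ, (s.core p).inner v (0 : ℝ) = 0 := by
    intro p v
    have h0 : (s.core p).inner (0 : ℝ) v = 0 := by
      have := (s.core p).smul_left (0 : ℝ) v (0 : ℝ)
      simpa using this
    have := (s.core p).conj_inner_symm v (0 : ℝ)
    rw [h0] at this
    simpa using this.symm
  -- kernels are trivial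
  have hker : ∀ (a b : P5) (h : a ≤ b) (u : ℝ), u ∈ LinearMap.ker (phi5 a b h) → u = 0 := by
    intro a b h u hu
    simp only [LinearMap.mem_ker, phi5] at hu
    split_ifs at hu with hc
    · simp only [LinearMap.smul_apply, LinearMap.id_coe, id_eq, smul_eq_mul] at hu
      linarith
    · simpa using hu
  -- compat applies to all vectors
  have key : ∀ (a b : P5) (h : a ≤ b) (v w : ℝ),
      (s.core b).inner (phi5 a b h v) (phi5 a b h w) = (s.core a).inner v w := by
    intro a b h v w
    refine s.compat a b h v w (fun u hu => ?_) (fun u hu => ?_) <;>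
      rw [hker a b h u hu]
    · exact hz a v
    · exact hz a w
  set I : ∀ p : P5, ℝ → ℝ → ℝ := fun p => (s.core p).inner with hI
  have hle : ∀ (a b : P5), a.isLow = true → b.isLow = false → a ≤ b :=
    fun a b ha hb => Or.inr ⟨ha, hb⟩
  -- evaluate phi5 on specific pairs
  have e11 : phi5 P5.x1 P5.y1 (hle _ _ rfl rfl) (1 : ℝ) = 2 := by simp [phi5]
  have e12 : phi5 P5.x1 P5.y2 (hle _ _ rfl rfl) (1 : ℝ) = 1 := by simp [phi5]
  have e21 : phi5 P5.x2 P5.y1 (hle _ _ rfl rfl) (1 : ℝ) = 1 := by simp [phi5]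
  have e22 : phi5 P5.x2 P5.y2 (hle _ _ rfl rfl) (1 : ℝ) = 1 := by simp [phi5]
  have k11 := key P5.x1 P5.y1 (hle _ _ rfl rfl) 1 1
  have k12 := key P5.x1 P5.y2 (hle _ _ rfl rfl) 1 1
  have k21 := key P5.x2 P5.y1 (hle _ _ rfl rfl) 1 1
  have k22 := key P5.x2 P5.y2 (hle _ _ rfl rfl) 1 1
  rw [e11] at k11; rw [e12] at k12; rw [e21] at k21; rw [e22] at k22
  -- expand inner 2 2 = 4 * inner 1 1 at y1
  have h2 : (s.core P5.y1).inner (2 : ℝ) (2 : ℝ) = 4 * (s.core P5.y1).inner 1 1 := by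
    have hs1 : (s.core P5.y1).inner ((2 : ℝ) • (1:ℝ)) ((2:ℝ) • (1:ℝ))
        = (starRingEnd ℝ) 2 * (s.core P5.y1).inner (1:ℝ) ((2:ℝ) • (1:ℝ)) :=
      (s.core P5.y1).smul_left 1 ((2:ℝ) • (1:ℝ)) 2
    have hs2 : (s.core P5.y1).inner ((2:ℝ) • (1:ℝ)) (1:ℝ)
        = (starRingEnd ℝ) 2 * (s.core P5.y1).inner (1:ℝ) (1:ℝ) :=
      (s.core P5.y1).smul_left 1 (1:ℝ) 2
    have hcs : (starRingEnd ℝ) ((s.core P5.y1).inner ((2:ℝ) • (1:ℝ)) (1:ℝ))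
        = (s.core P5.y1).inner (1:ℝ) ((2:ℝ) • (1:ℝ)) :=
      (s.core P5.y1).conj_inner_symm _ _
    rw [hs2] at hcs
    simp only [starRingEnd_apply, star_trivial] at hs1 hs2 hcs
    have : ((2:ℝ) • (1:ℝ)) = (2:ℝ) := by norm_num
    rw [this] at hs1 hcs
    rw [hs1, ← hcs]
    ring
  rw [h2] at k11
  -- positivity of inner 1 1 at y1
  have hpos : (s.core P5.y1).inner (1:ℝ) (1:ℝ) ≠ 0 := by
    intro h
    exact one_ne_zero ((s.core P5.y1).definite 1 h)
  -- combine: 4 * a(y1) = a(x1) = a(y2) = a(x2) = a(y1)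
  have : (4 : ℝ) * (s.core P5.y1).inner 1 1 = (s.core P5.y1).inner 1 1 := by
    rw [k11, ← k12, k22, ← k21]
  have hz1 : (s.core P5.y1).inner (1:ℝ) (1:ℝ) = 0 := by linarith
  exact hpos hz1
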